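/- arXiv:1810.01411 — 2 statements merged into one kernel-verified Lean document; each statement's English description precedes it below -/
import Mathlib

section
/- For the scalar delay differential equation Ṙ(t) = κR(t)(C − Σ_{r∈S} R(t−τ_r)) with κ > 0, heterogeneous delays τ_r ≥ 0 with mean T̄, |S| = N, if a := κCT̄ < 1/2 and the initial condition R is positive and bounded on [−max τ_r, 0], then R(t) → C/N as t → ∞. -/
open Set Filter
set_option maxHeartbeats 2000000

lemma closed_sublevel {f : ℝ → ℝ} {a b K : ℝ} (hc : ContinuousOn f (Icc a b)) :
    IsCompact {u ∈ Icc a b | f u ≤ K} := by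
  have h1 : {u ∈ Icc a b | f u ≤ K} = Icc a b ∩ f ⁻¹' (Iic K) := rfl
  rw [h1]
  exact (isCompact_Icc).of_isClosed_subset
    (hc.preimage_isClosed_of_isClosed isClosed_Icc isClosed_Iic) inter_subset_left

lemma barrier_upper {f f' : ℝ → ℝ} {a K : ℝ}
    (hc : ContinuousOn f (Ici a))
    (hd : ∀ t, a < t → HasDerivAt f (f' t) t)
    (hK : ∀ t, a < t → K < f t → f' t ≤ 0)
    (hfa : f a ≤ K) : ∀ t, a ≤ t → f t ≤ K := by
  intro t₁ ht₁
  by_contra hgt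
  push_neg at hgt
  have hat : a < t₁ := by
    rcases eq_or_lt_of_le ht₁ with h | h
    · exact absurd hfa (by rw [h]; exact not_le.2 hgt)
    · exact h
  set A := {u ∈ Icc a t₁ | f u ≤ K} with hA
  have hAne : A.Nonempty := ⟨a, ⟨le_refl a, le_of_lt hat⟩, hfa⟩
  have hAcomp : IsCompact A := closed_sublevel (hc.mono Icc_subset_Ici_self)
  have hsmem : sSup A ∈ A := hAcomp.sSup_mem hAne
  set s := sSup A with hs
  have hsa : a ≤ s := hsmem.1.1
  have hst : s ≤ t₁ := hsmem.1.2
  have hfs : f s ≤ K := hsmem.2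
  have hslt : s < t₁ := lt_of_le_of_ne hst (fun h => absurd (h ▸ hfs) (not_le.2 hgt))
  have hgtK : ∀ u ∈ Ioc s t₁, K < f u := by
    intro u hu
    by_contra hle
    push_neg at hle
    have : u ∈ A := ⟨⟨le_trans hsa (le_of_lt hu.1), hu.2⟩, hle⟩
    exact absurd (le_csSup hAcomp.bddAbove this) (not_le.2 hu.1)
  obtain ⟨c, hc1, hc2⟩ := exists_hasDerivAt_eq_slope f f' hslt
    (hc.mono (Icc_subset_Ici_self.trans (Ici_subset_Ici.2 hsa)))
    (fun x hx => hd x (lt_of_le_of_lt hsa hx.1))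
  have hca : a < c := lt_of_le_of_lt hsa hc1.1
  have hfc : K < f c := hgtK c ⟨hc1.1, le_of_lt hc1.2⟩
  have hpos : 0 < f' c := by
    rw [hc2]
    apply div_pos (by linarith) (by linarith [hc1.1, hc1.2])
  exact absurd (hK c hca hfc) (not_le.2 hpos)

lemma barrier_lower {f f' : ℝ → ℝ} {a K : ℝ}
    (hc : ContinuousOn f (Ici a))
    (hd : ∀ t, a < t → HasDerivAt f (f' t) t)
    (hK : ∀ t, a < t → f t < K → 0 ≤ f' t)
    (hfa : K ≤ f a) : ∀ t, a ≤ t → K ≤ f t := by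
  have := barrier_upper (f := fun u => -f u) (f' := fun u => -f' u) (a := a) (K := -K)
    (hc.neg) (fun t ht => (hd t ht).neg)
    (fun t ht h => by
      simp only [neg_nonpos]
      exact hK t ht (by linarith))
    (by linarith)
  intro t ht
  have h2 := this t ht
  linarith

lemma closed_suplevel {f : ℝ → ℝ} {a b K : ℝ} (hc : ContinuousOn f (Icc a b)) :
    IsCompact {u ∈ Icc a b | K ≤ f u} :=
  (isCompact_Icc).of_isClosed_subset
    (hc.preimage_isClosed_of_isClosed isClosed_Icc isClosed_Ici) inter_subset_left

lemma closed_sublevel2 {f : ℝ → ℝ} {a b K : ℝ} (hc : ContinuousOn f (Icc a b)) :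
    IsCompact {u ∈ Icc a b | f u ≤ K} :=
  (isCompact_Icc).of_isClosed_subset
    (hc.preimage_isClosed_of_isClosed isClosed_Icc isClosed_Iic) inter_subset_left

lemma exists_good_point {f f' : ℝ → ℝ} {c₁ c₂ : ℝ}
    (hc : Continuous f)
    (hd : ∀ t, 0 < t → HasDerivAt f (f' t) t)
    (h12 : c₁ < c₂)
    (hlow : ∃ᶠ t in atTop, f t < c₁)
    (hhigh : ∃ᶠ t in atTop, c₂ < f t)
    (T : ℝ) (hT : 0 < T) :
    ∃ t, T ≤ t ∧ c₁ ≤ f t ∧ f t ≤ c₂ ∧ 0 < f' t := by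
  obtain ⟨t₂, ht₂, ht₂T⟩ := (hlow.and_eventually (eventually_ge_atTop T)).exists
  obtain ⟨t₃, ht₃, ht₃T⟩ := (hhigh.and_eventually (eventually_ge_atTop t₂)).exists
  have ht₂₃ : t₂ < t₃ := lt_of_le_of_ne ht₃T (fun h => by rw [h] at ht₂; linarith)
  -- first time ≥ t₂ where f reaches c₂
  set A₂ := {u ∈ Icc t₂ t₃ | c₂ ≤ f u} with hA₂
  have hA₂ne : A₂.Nonempty := ⟨t₃, ⟨le_of_lt ht₂₃, le_refl _⟩, le_of_lt ht₃⟩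
  have hA₂c : IsCompact A₂ := closed_suplevel hc.continuousOn
  have hs₂mem : sInf A₂ ∈ A₂ := hA₂c.sInf_mem hA₂ne
  set s₂ := sInf A₂ with hs₂
  have hs₂1 : t₂ ≤ s₂ := hs₂mem.1.1
  have h2lt : t₂ < s₂ := lt_of_le_of_ne hs₂1 (fun h => by
    have := hs₂mem.2; rw [← h] at this; linarith)
  have hbelow : ∀ u ∈ Ico t₂ s₂, f u < c₂ := by
    intro u hu
    by_contra hle
    push_neg at hle
    have : u ∈ A₂ := ⟨⟨hu.1, le_trans (le_of_lt hu.2) hs₂mem.1.2⟩, hle⟩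
    exact absurd (csInf_le hA₂c.bddBelow this) (not_le.2 hu.2)
  -- last time ≤ s₂ where f is ≤ c₁
  set A₁ := {u ∈ Icc t₂ s₂ | f u ≤ c₁} with hA₁
  have hA₁ne : A₁.Nonempty := ⟨t₂, ⟨le_refl _, hs₂1⟩, le_of_lt ht₂⟩
  have hA₁c : IsCompact A₁ := closed_sublevel2 hc.continuousOn
  have hs₁mem : sSup A₁ ∈ A₁ := hA₁c.sSup_mem hA₁ne
  set s₁ := sSup A₁ with hs₁
  have hs₁2 : s₁ ≤ s₂ := hs₁mem.1.2
  have hfs₁ : f s₁ ≤ c₁ := hs₁mem.2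
  have h1lt : s₁ < s₂ := lt_of_le_of_ne hs₁2 (fun h => by
    have := hs₂mem.2; rw [← h] at this; linarith)
  have habove : ∀ u ∈ Ioc s₁ s₂, c₁ < f u := by
    intro u hu
    by_contra hle
    push_neg at hle
    have : u ∈ A₁ := ⟨⟨le_trans hs₁mem.1.1 (le_of_lt hu.1), hu.2⟩, hle⟩
    exact absurd (le_csSup hA₁c.bddAbove this) (not_le.2 hu.1)
  have hTt₂ : (0:ℝ) < t₂ := lt_of_lt_of_le hT ht₂T
  obtain ⟨c, hcmem, hcslope⟩ := exists_hasDerivAt_eq_slope f f' h1lt hc.continuousOn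
    (fun x hx => hd x (lt_trans hTt₂ (lt_of_le_of_lt hs₁mem.1.1 hx.1)))
  refine ⟨c, ?_, ?_, ?_, ?_⟩
  · exact le_trans ht₂T (le_trans hs₁mem.1.1 (le_of_lt hcmem.1))
  · exact le_of_lt (habove c ⟨hcmem.1, le_of_lt hcmem.2⟩)
  · exact le_of_lt (hbelow c ⟨le_trans hs₁mem.1.1 (le_of_lt hcmem.1), hcmem.2⟩)
  · rw [hcslope]
    have hfs₂ : c₂ ≤ f s₂ := hs₂mem.2
    exact div_pos (by linarith) (by linarith [hcmem.1, hcmem.2])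

/-- chord bound: log lies above its secant on `[α, β]`. -/
lemma log_chord {α β u : ℝ} (h0 : 0 < α) (hαβ : α < β) (hu : α ≤ u) (huβ : u ≤ β) :
    Real.log α + (u - α) * ((Real.log β - Real.log α) / (β - α)) ≤ Real.log u := by
  have hβ0 : 0 < β := lt_trans h0 hαβ
  set θ := (u - α) / (β - α) with hθ
  have hθ0 : 0 ≤ θ := div_nonneg (by linarith) (by linarith)
  have hθ1 : θ ≤ 1 := (div_le_one (by linarith)).2 (by linarith)
  have hconc := (strictConcaveOn_log_Ioi.concaveOn).2 (mem_Ioi.2 hβ0) (mem_Ioi.2 h0)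
    hθ0 (by linarith : (0:ℝ) ≤ 1 - θ) (by ring)
  have hθβα : θ * (β - α) = u - α := div_mul_cancel₀ _ (ne_of_gt (by linarith))
  have hcomb : θ • β + (1 - θ) • α = u := by
    simp only [smul_eq_mul]
    nlinarith [hθβα]
  rw [hcomb] at hconc
  simp only [smul_eq_mul] at hconc
  have : Real.log α + (u - α) * ((Real.log β - Real.log α) / (β - α)) =
      θ * Real.log β + (1 - θ) * Real.log α := by
    rw [hθ]; field_simp; ring
  linarith [hconc, this.ge, this.le]

/-- Jensen / AM-GM: average of logs ≤ log of average. -/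
lemma sum_log_le {ι : Type*} (S : Finset ι) (hS : S.Nonempty) (g : ι → ℝ)
    (hg : ∀ r ∈ S, 0 < g r) :
    ∑ r ∈ S, Real.log (g r) ≤ S.card * Real.log ((∑ r ∈ S, g r) / S.card) := by
  have hcard : (0:ℝ) < S.card := by exact_mod_cast Finset.card_pos.2 hS
  have h := (strictConcaveOn_log_Ioi.concaveOn).le_map_sum (t := S)
    (w := fun _ => (S.card : ℝ)⁻¹) (p := g)
    (fun i _ => by positivity)
    (by rw [Finset.sum_const, nsmul_eq_mul]; exact mul_inv_cancel₀ hcard.ne')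
    (fun i hi => mem_Ioi.2 (hg i hi))
  simp only [smul_eq_mul] at h
  simp only [← Finset.mul_sum] at h
  have h2 : (S.card:ℝ)⁻¹ * ∑ i ∈ S, g i = (∑ r ∈ S, g r) / S.card := by ring
  rw [h2] at h
  calc ∑ r ∈ S, Real.log (g r) = S.card * ((S.card:ℝ)⁻¹ * ∑ i ∈ S, Real.log (g i)) := by
        field_simp
    _ ≤ S.card * Real.log ((∑ r ∈ S, g r) / S.card) := by
        apply mul_le_mul_of_nonneg_left h (le_of_lt hcard)

lemma exp_sub_one_le (x : ℝ) (hx : 0 ≤ x) : Real.exp x - 1 ≤ x * Real.exp x := by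
  have h := Real.add_one_le_exp (-x)
  have h2 := Real.exp_pos x
  have h3 : Real.exp (-x) * Real.exp x = 1 := by
    rw [← Real.exp_add]; simp
  nlinarith

lemma exp_half_lt : Real.exp (1/2) < 1.65 := by
  have h1 : Real.exp (1/2) * Real.exp (1/2) = Real.exp 1 := by
    rw [← Real.exp_add]; norm_num
  have h2 := Real.exp_one_lt_d9
  have h3 := Real.exp_pos (1/2 : ℝ)
  nlinarith

/-- Final algebraic contradiction. -/
lemma final_algebra {a u v : ℝ} (ha0 : 0 ≤ a) (ha : a < 1/2)
    (hv0 : 0 < v) (hv1 : v ≤ 1) (huv : v < u)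
    (h1 : Real.log u ≤ a * (1 - v))
    (h2 : (1 - v) * (Real.log u - Real.log v) ≤ a * (u - 1) * (u - v)) : False := by
  have hu0 : 0 < u := lt_trans hv0 huv
  have hlog : Real.log v < Real.log u := Real.log_lt_log hv0 huv
  have hu1 : 1 < u := by
    by_contra h
    push_neg at h
    have hrhs : a * (u - 1) * (u - v) ≤ 0 := by
      apply mul_nonpos_of_nonpos_of_nonneg
      · apply mul_nonpos_of_nonneg_of_nonpos ha0; linarith
      · linarith
    have hv1' : v < 1 := by
      rcases lt_or_eq_of_le hv1 with h' | h'
      · exact h'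
      · exfalso; rw [h'] at huv; linarith
    nlinarith
  have hvlt1 : v < 1 := by
    rcases lt_or_eq_of_le hv1 with h' | h'
    · exact h'
    · exfalso
      rw [h'] at h1
      simp at h1
      have := Real.log_pos hu1
      linarith
  have hA0 : 0 < 1 - v := by linarith
  have haA : a * (1 - v) < 1/2 := by nlinarith
  have hE : Real.exp (a * (1 - v)) < 1.65 :=
    lt_trans (Real.exp_lt_exp.2 (by linarith)) exp_half_lt
  have hE0 : 0 < Real.exp (a * (1 - v)) := Real.exp_pos _
  have hu_le : u ≤ Real.exp (a * (1 - v)) := by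
    calc u = Real.exp (Real.log u) := (Real.exp_log hu0).symm
    _ ≤ Real.exp (a * (1 - v)) := Real.exp_le_exp.2 h1
  have hu1' : u - 1 ≤ a * (1 - v) * Real.exp (a * (1 - v)) := by
    have := exp_sub_one_le (a * (1 - v)) (by positivity)
    linarith
  have hlogv : Real.log v ≤ v - 1 := Real.log_le_sub_one_of_pos hv0
  have hlogu : 0 ≤ Real.log u := Real.log_nonneg (le_of_lt hu1)
  have hLHS : (1 - v) * (1 - v) ≤ (1 - v) * (Real.log u - Real.log v) := by nlinarith
  have huv2 : u - v ≤ a * (1 - v) * Real.exp (a * (1 - v)) + (1 - v) := by linarith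
  have hRHS : a * (u - 1) * (u - v) ≤
      a * (a * (1 - v) * Real.exp (a * (1 - v))) *
        (a * (1 - v) * Real.exp (a * (1 - v)) + (1 - v)) := by
    have h1' : 0 ≤ u - 1 := by linarith
    have h2' : 0 ≤ u - v := by linarith
    apply mul_le_mul
    · exact mul_le_mul_of_nonneg_left hu1' ha0
    · exact huv2
    · exact h2'
    · positivity
  set E := Real.exp (a * (1 - v)) with hEdef
  have hfinal : (1 - v) * (1 - v) ≤ (a^3 * E^2 + a^2 * E) * ((1 - v) * (1 - v)) := by
    nlinarith [hLHS, h2, hRHS]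
  have hone : 1 ≤ a^3 * E^2 + a^2 * E := by nlinarith [mul_pos hA0 hA0]
  have hE2 : E^2 < 2.7225 := by nlinarith
  have ha3 : a^3 ≤ (1/2:ℝ)^3 := by
    apply pow_le_pow_left₀ ha0 (le_of_lt ha)
  have ha2 : a^2 ≤ (1/2:ℝ)^2 := by
    apply pow_le_pow_left₀ ha0 (le_of_lt ha)
  have hE2nn : (0:ℝ) ≤ E^2 := sq_nonneg E
  have ha3nn : (0:ℝ) ≤ a^3 := pow_nonneg ha0 3
  have ha2nn : (0:ℝ) ≤ a^2 := pow_nonneg ha0 2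
  have ht1 : a^3 * E^2 ≤ (1/2:ℝ)^3 * 2.7225 :=
    mul_le_mul ha3 (le_of_lt hE2) hE2nn (by norm_num)
  have ht2 : a^2 * E ≤ (1/2:ℝ)^2 * 1.65 :=
    mul_le_mul ha2 (le_of_lt hE) (le_of_lt hE0) (by norm_num)
  have : ((1/2:ℝ)^3 * 2.7225) + ((1/2:ℝ)^2 * 1.65) < 1 := by norm_num
  linarith

/-- Solutions of `R' = g·R` with continuous `g` stay positive. -/
lemma pos_of_linear_ode {R g : ℝ → ℝ} (hR : Continuous R) (hg : Continuous g)
    (hode : ∀ t, 0 < t → HasDerivAt R (g t * R t) t) (h0 : 0 < R 0) :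
    ∀ t, 0 ≤ t → 0 < R t := by
  set G := fun t => ∫ x in (0:ℝ)..t, g x with hG
  have hGd : ∀ t, HasDerivAt G (g t) t := fun t =>
    (hg.integral_hasStrictDerivAt 0 t).hasDerivAt
  have hGcont : Continuous G :=
    Differentiable.continuous (fun t => (hGd t).differentiableAt)
  set F := fun t => R t * Real.exp (-G t) with hF
  have hFcont : Continuous F := hR.mul (hGcont.neg.rexp)
  have hFd : ∀ x, 0 < x → HasDerivAt F 0 x := by
    intro x hx
    have h1 : HasDerivAt (fun t => Real.exp (-G t)) (Real.exp (-G x) * (-g x)) x :=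
      (((hGd x).neg).exp)
    have : HasDerivAt (fun t => R t * Real.exp (-G t))
        (g x * R x * Real.exp (-G x) + R x * (Real.exp (-G x) * -g x)) x := (hode x hx).mul h1
    convert this using 1
    ring
  have key : ∀ t, 0 < t → F t = F 0 := by
    intro t ht
    have htt : ∀ s, 0 < s → s ≤ t → F t = F s := by
      intro s hs hst
      exact constant_of_has_deriv_right_zero
        (hFcont.continuousOn)
        (fun x hx => ((hFd x (lt_of_lt_of_le hs hx.1)).hasDerivWithinAt))
        t ⟨hst, le_refl t⟩
    have htend : Tendsto F (nhdsWithin 0 (Ioi 0)) (nhds (F 0)) :=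
      (hFcont.continuousAt.tendsto).mono_left nhdsWithin_le_nhds
    have heq : F =ᶠ[nhdsWithin 0 (Ioi 0)] (fun _ => F t) := by
      filter_upwards [Ioc_mem_nhdsGT_of_mem (⟨le_refl _, ht⟩ : (0:ℝ) ∈ Ico 0 t)]
        with s hs
      exact (htt s hs.1 hs.2).symm
    have := htend.congr' heq
    exact (tendsto_nhds_unique this tendsto_const_nhds).symm
  intro t ht
  rcases eq_or_lt_of_le ht with h | h
  · rwa [← h]
  · have hFt : F t = F 0 := key t h
    have hF0 : F 0 = R 0 := by
      simp only [hF, hG, intervalIntegral.integral_same, neg_zero, Real.exp_zero, mul_one]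
    have hFt' : R t * Real.exp (-G t) = R 0 := by rw [← hF0, ← hFt]
    have hexp : 0 < Real.exp (-G t) := Real.exp_pos _
    nlinarith

theorem stmt_9 {ι : Type*} (S : Finset ι) (hS : S.Nonempty)
    (τ : ι → ℝ) (hτ : ∀ r ∈ S, 0 ≤ τ r)
    (N : ℕ) (hN : N = S.card)
    (Tbar τmax : ℝ) (hTbar : Tbar = (∑ r ∈ S, τ r) / N)
    (hτmax : IsGreatest (τ '' S) τmax)
    (C κ : ℝ) (hC : 0 < C) (hκ : 0 < κ)
    (ha : κ * C * Tbar < 1/2)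
    (R : ℝ → ℝ) (hRcont : Continuous R)
    (hRpos : ∀ t ∈ Icc (-τmax) 0, 0 < R t)
    (hRbdd : BddAbove (R '' Icc (-τmax) 0))
    (hode : ∀ t > 0, HasDerivAt R (κ * R t * (C - ∑ r ∈ S, R (t - τ r))) t) :
    Tendsto R atTop (nhds (C / N)) := by
  -- ## basic facts
  have hNpos : 0 < N := hN ▸ Finset.card_pos.2 hS
  have hNR : (0:ℝ) < N := by exact_mod_cast hNpos
  have hτle : ∀ r ∈ S, τ r ≤ τmax := fun r hr => hτmax.2 (Set.mem_image_of_mem τ hr)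
  have hτm0 : 0 ≤ τmax := by
    obtain ⟨r, hr, heq⟩ := hτmax.1
    rw [← heq]
    exact hτ r hr
  have hsum : ∑ r ∈ S, τ r = N * Tbar := by
    rw [hTbar]; field_simp
  have hTb0 : 0 ≤ Tbar := by
    rw [hTbar]
    apply div_nonneg (Finset.sum_nonneg hτ) (le_of_lt hNR)
  have hCN : 0 < C / N := div_pos hC hNR
  set P := fun t => ∑ r ∈ S, R (t - τ r) with hP
  have hPcont : Continuous P := by
    apply continuous_finset_sum
    intro r _
    exact hRcont.comp (continuous_id.sub continuous_const)
  -- ## positivity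
  have hpos : ∀ t, -τmax ≤ t → 0 < R t := by
    have hposnn : ∀ t, 0 ≤ t → 0 < R t := by
      apply pos_of_linear_ode hRcont
        (g := fun t => κ * (C - P t)) (continuous_const.mul (continuous_const.sub hPcont))
      · intro t ht
        have := hode t ht
        convert this using 1
        simp only [hP]
        ring
      · exact hRpos 0 ⟨neg_nonpos.2 hτm0, le_refl 0⟩
    intro t ht
    rcases le_or_gt t 0 with h | h
    · exact hRpos t ⟨ht, h⟩
    · exact hposnn t (le_of_lt h)
  -- log of R
  set y := fun t => Real.log (R t) with hy
  have hyd : ∀ t, 0 < t → HasDerivAt y (κ * (C - P t)) t := by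
    intro t ht
    have hRt : 0 < R t := hpos t (by linarith)
    have := (hode t ht).log (ne_of_gt hRt)
    convert this using 1
    field_simp [hP]
    ring
  have hycont : ContinuousOn y (Ici (-τmax)) :=
    (hRcont.continuousOn).log (fun x hx => ne_of_gt (hpos x hx))
  have hexpy : ∀ t, -τmax ≤ t → Real.exp (y t) = R t := fun t ht => Real.exp_log (hpos t ht)
  -- FTC and integral bounds
  have hintg : ∀ s t : ℝ, IntervalIntegrable (fun u => κ * (C - P u)) MeasureTheory.volume s t :=
    fun s t => (continuous_const.mul (continuous_const.sub hPcont)).intervalIntegrable s t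
  have hFTC : ∀ s t, 0 < s → s ≤ t → y t - y s = ∫ u in s..t, κ * (C - P u) := by
    intro s t hs hst
    refine (intervalIntegral.integral_eq_sub_of_hasDerivAt ?_ (hintg s t)).symm
    intro u hu
    rw [uIcc_of_le hst] at hu
    exact hyd u (lt_of_lt_of_le hs hu.1)
  have hIub : ∀ s t K, 0 < s → s ≤ t → (∀ u ∈ Icc s t, κ * (C - P u) ≤ K) →
      y t - y s ≤ (t - s) * K := by
    intro s t K hs hst hbd
    rw [hFTC s t hs hst]
    calc ∫ u in s..t, κ * (C - P u) ≤ ∫ _u in s..t, K :=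
          intervalIntegral.integral_mono_on hst (hintg s t) (intervalIntegrable_const) hbd
      _ = (t - s) * K := by rw [intervalIntegral.integral_const]; simp [smul_eq_mul]
  have hIlb : ∀ s t K, 0 < s → s ≤ t → (∀ u ∈ Icc s t, K ≤ κ * (C - P u)) →
      (t - s) * K ≤ y t - y s := by
    intro s t K hs hst hbd
    rw [hFTC s t hs hst]
    calc (t - s) * K = ∫ _u in s..t, K := by rw [intervalIntegral.integral_const]; simp [smul_eq_mul]
      _ ≤ ∫ u in s..t, κ * (C - P u) :=
          intervalIntegral.integral_mono_on hst (intervalIntegrable_const) (hintg s t) hbd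
  have hPnn : ∀ u, 0 ≤ u → 0 ≤ P u := by
    intro u hu
    apply Finset.sum_nonneg
    intro q hq
    exact le_of_lt (hpos _ (by have := hτle q hq; linarith))
  have hconstsum : ∑ _r ∈ S, C / N = C := by
    rw [Finset.sum_const, ← hN, nsmul_eq_mul]
    field_simp
  have hκC : 0 ≤ κ * C := le_of_lt (mul_pos hκ hC)
  -- ## global upper bound
  obtain ⟨B, hB0, hBC, hB⟩ : ∃ B, 0 < B ∧ C / N ≤ B ∧ ∀ t, -τmax ≤ t → R t ≤ B := by
    set Kup := max (Real.log (C/N) + κ * C * τmax) (y τmax) with hKup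
    have hyK : ∀ t, τmax ≤ t → y t ≤ Kup := by
      apply barrier_upper (f' := fun t => κ * (C - P t))
        (hycont.mono (fun x hx => by simp only [mem_Ici] at *; linarith))
        (fun t ht => hyd t (lt_of_le_of_lt hτm0 ht))
        ?_ (le_max_right _ _)
      intro t ht hKlt
      have hkey : ∀ r ∈ S, C / N ≤ R (t - τ r) := by
        intro r hr
        have hτr0 := hτ r hr
        have hτrm := hτle r hr
        have hs0 : 0 < t - τ r := by linarith
        have hbd : ∀ u ∈ Icc (t - τ r) t, κ * (C - P u) ≤ κ * C := by
          intro u hu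
          have h1 : 0 ≤ P u := hPnn u (by have := hu.1; linarith)
          nlinarith
        have hstep := hIub (t - τ r) t (κ * C) hs0 (by linarith) hbd
        have h2 : Real.log (C/N) + κ * C * τmax < y t := lt_of_le_of_lt (le_max_left _ _) hKlt
        have hyge : Real.log (C / N) ≤ y (t - τ r) := by
          nlinarith [mul_le_mul_of_nonneg_right hτrm hκC]
        calc C / N = Real.exp (Real.log (C/N)) := (Real.exp_log hCN).symm
          _ ≤ Real.exp (y (t - τ r)) := Real.exp_le_exp.2 hyge
          _ = R (t - τ r) := hexpy _ (by linarith)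
      have hPC : C ≤ P t :=
        le_trans (le_of_eq hconstsum.symm) (Finset.sum_le_sum hkey)
      exact mul_nonpos_of_nonneg_of_nonpos (le_of_lt hκ) (by linarith)
    obtain ⟨x, hx, hmax⟩ := isCompact_Icc.exists_isMaxOn
      (nonempty_Icc.2 (by linarith : -τmax ≤ τmax)) hRcont.continuousOn
    refine ⟨max (R x) (Real.exp Kup), lt_of_lt_of_le (Real.exp_pos Kup) (le_max_right _ _), ?_, ?_⟩
    · calc C / N = Real.exp (Real.log (C/N)) := (Real.exp_log hCN).symm
        _ ≤ Real.exp Kup := Real.exp_le_exp.2 (le_trans (by nlinarith) (le_max_left _ _))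
        _ ≤ _ := le_max_right _ _
    · intro t ht
      rcases le_or_gt t τmax with h | h
      · exact le_trans (isMaxOn_iff.1 hmax t ⟨ht, h⟩) (le_max_left _ _)
      · calc R t = Real.exp (y t) := (hexpy t ht).symm
          _ ≤ Real.exp Kup := Real.exp_le_exp.2 (hyK t (le_of_lt h))
          _ ≤ _ := le_max_right _ _
  have hPle : ∀ u, 0 ≤ u → P u ≤ N * B := by
    intro u hu
    have hup : ∀ q ∈ S, R (u - τ q) ≤ B := fun q hq => hB _ (by have := hτle q hq; linarith)
    calc P u ≤ ∑ _q ∈ S, B := Finset.sum_le_sum hup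
      _ = N * B := by rw [Finset.sum_const, ← hN, nsmul_eq_mul]
  have hCNB : C ≤ N * B := by
    calc C = N * (C/N) := by field_simp
      _ ≤ N * B := mul_le_mul_of_nonneg_left hBC (le_of_lt hNR)
  -- ## global lower bound
  obtain ⟨b, hb0, hbB : b ≤ B, hb⟩ : ∃ b, 0 < b ∧ b ≤ B ∧ ∀ t, -τmax ≤ t → b ≤ R t := by
    set G₀ := κ * (N * B - C) with hG₀
    have hG₀0 : 0 ≤ G₀ := mul_nonneg (le_of_lt hκ) (by linarith)
    set Kdn := min (Real.log (C/N) - G₀ * τmax) (y τmax) with hKdn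
    have hyK : ∀ t, τmax ≤ t → Kdn ≤ y t := by
      apply barrier_lower (f' := fun t => κ * (C - P t))
        (hycont.mono (fun x hx => by simp only [mem_Ici] at *; linarith))
        (fun t ht => hyd t (lt_of_le_of_lt hτm0 ht))
        ?_ (min_le_right _ _)
      intro t ht hKgt
      have hkey : ∀ r ∈ S, R (t - τ r) ≤ C / N := by
        intro r hr
        have hτr0 := hτ r hr
        have hτrm := hτle r hr
        have hs0 : 0 < t - τ r := by linarith
        have hbd : ∀ u ∈ Icc (t - τ r) t, -G₀ ≤ κ * (C - P u) := by
          intro u hu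
          have h1 : P u ≤ N * B := hPle u (by have := hu.1; linarith)
          rw [hG₀]
          nlinarith
        have hstep := hIlb (t - τ r) t (-G₀) hs0 (by linarith) hbd
        have h2 : y t < Real.log (C/N) - G₀ * τmax := lt_of_lt_of_le hKgt (min_le_left _ _)
        have hyle : y (t - τ r) ≤ Real.log (C / N) := by
          nlinarith [mul_le_mul_of_nonneg_right hτrm hG₀0]
        calc R (t - τ r) = Real.exp (y (t - τ r)) := (hexpy _ (by linarith)).symm
          _ ≤ Real.exp (Real.log (C/N)) := Real.exp_le_exp.2 hyle
          _ = C / N := Real.exp_log hCN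
      have hPC : P t ≤ C :=
        le_trans (Finset.sum_le_sum hkey) (le_of_eq hconstsum)
      exact mul_nonneg (le_of_lt hκ) (by linarith)
    obtain ⟨x, hx, hmin⟩ := isCompact_Icc.exists_isMinOn
      (nonempty_Icc.2 (by linarith : -τmax ≤ τmax)) hRcont.continuousOn
    refine ⟨min (R x) (Real.exp Kdn), lt_min (hpos x hx.1) (Real.exp_pos _), ?_, ?_⟩
    · exact le_trans (min_le_left _ _) (hB x hx.1)
    · intro t ht
      rcases le_or_gt t τmax with h | h
      · exact le_trans (min_le_left _ _) (isMinOn_iff.1 hmin t ⟨ht, h⟩)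
      · calc min (R x) (Real.exp Kdn) ≤ Real.exp Kdn := min_le_right _ _
          _ ≤ Real.exp (y t) := Real.exp_le_exp.2 (hyK t (le_of_lt h))
          _ = R t := hexpy t (by linarith)
  -- ## limsup / liminf
  set Λ := limsup R atTop with hΛdef
  set lam := liminf R atTop with hlamdef
  have hevub : ∀ᶠ t in atTop, R t ≤ B := (eventually_ge_atTop (-τmax)).mono fun t ht => hB t ht
  have hevlb : ∀ᶠ t in atTop, b ≤ R t := (eventually_ge_atTop (-τmax)).mono fun t ht => hb t ht
  have hbddA : IsBoundedUnder (· ≤ ·) atTop R := isBoundedUnder_of_eventually_le hevub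
  have hbddB : IsBoundedUnder (· ≥ ·) atTop R := isBoundedUnder_of_eventually_ge hevlb
  have hcobA : IsCoboundedUnder (· ≤ ·) atTop R := hbddB.isCoboundedUnder_le
  have hcobB : IsCoboundedUnder (· ≥ ·) atTop R := hbddA.isCoboundedUnder_ge
  have hlamΛ : lam ≤ Λ := liminf_le_limsup hbddA hbddB
  have hblam : b ≤ lam := le_liminf_of_le hcobB hevlb
  have hΛB : Λ ≤ B := limsup_le_of_le hcobA hevub
  have hlam0 : 0 < lam := lt_of_lt_of_le hb0 hblam
  have hΛ0 : 0 < Λ := lt_of_lt_of_le hlam0 hlamΛ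
  -- ## dichotomy
  rcases eq_or_lt_of_le hlamΛ with hconv | hosc
  · -- convergent case
    have htend : Tendsto R atTop (nhds Λ) :=
      tendsto_of_liminf_eq_limsup hconv rfl hbddA hbddB
    have hΛeq : Λ = C / N := by
      have hPtend : Tendsto P atTop (nhds (N * Λ)) := by
        have h1 : Tendsto (fun t : ℝ => ∑ r ∈ S, R (t - τ r)) atTop (nhds (∑ _r ∈ S, Λ)) := by
          apply tendsto_finset_sum
          intro r _
          have h2 : Tendsto (fun t : ℝ => t - τ r) atTop atTop := by
            simpa [sub_eq_add_neg] using tendsto_atTop_add_const_right atTop (-(τ r)) tendsto_id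
          exact htend.comp h2
        have h3 : ∑ _r ∈ S, Λ = (N : ℝ) * Λ := by
          rw [Finset.sum_const, ← hN, nsmul_eq_mul]
        rwa [h3] at h1
      by_contra hne
      have hNΛne : (N:ℝ) * Λ ≠ C := by
        intro h
        apply hne
        rw [eq_div_iff (ne_of_gt hNR)]
        linarith
      have hlogB : ∀ t, -τmax ≤ t → y t ≤ Real.log B :=
        fun t ht => Real.log_le_log (hpos t ht) (hB t ht)
      have hlogb : ∀ t, -τmax ≤ t → Real.log b ≤ y t :=
        fun t ht => Real.log_le_log hb0 (hb t ht)
      rcases lt_or_gt_of_ne hNΛne with hlt | hgt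
      · -- N Λ < C : y grows without bound
        have hdlt : (N:ℝ) * Λ < ((N:ℝ) * Λ + C) / 2 := by linarith
        have hc2 : 0 < κ * (C - ((N:ℝ) * Λ + C) / 2) := mul_pos hκ (by linarith)
        obtain ⟨T₁, hT₁⟩ := eventually_atTop.1
          ((hPtend.eventually_lt_const hdlt).and (eventually_ge_atTop 1))
        have hT₁1 : (1:ℝ) ≤ T₁ := (hT₁ T₁ (le_refl _)).2
        have hQpos : 0 < Real.log B - y T₁ + 1 := by
          have := hlogB T₁ (by linarith)
          linarith
        obtain ⟨t, htT₁, htbig⟩ : ∃ t, T₁ ≤ t ∧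
            Real.log B - y T₁ + 1 ≤ (t - T₁) * (κ * (C - ((N:ℝ) * Λ + C) / 2)) := by
          refine ⟨T₁ + (Real.log B - y T₁ + 1) / (κ * (C - ((N:ℝ) * Λ + C) / 2)), ?_, ?_⟩
          · have := div_nonneg (le_of_lt hQpos) (le_of_lt hc2)
            linarith
          · rw [add_sub_cancel_left, div_mul_cancel₀ _ (ne_of_gt hc2)]
        have hbd : ∀ u ∈ Icc T₁ t, κ * (C - ((N:ℝ) * Λ + C) / 2) ≤ κ * (C - P u) := by
          intro u hu
          have h6 : P u < ((N:ℝ) * Λ + C) / 2 := (hT₁ u hu.1).1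
          nlinarith
        have hgrow := hIlb T₁ t (κ * (C - ((N:ℝ) * Λ + C) / 2)) (by linarith) htT₁ hbd
        have hyt : y t ≤ Real.log B := hlogB t (by linarith)
        linarith
      · -- C < N Λ : y decreases without bound
        have hdlt : ((N:ℝ) * Λ + C) / 2 < (N:ℝ) * Λ := by linarith
        have hc2 : 0 < κ * (((N:ℝ) * Λ + C) / 2 - C) := mul_pos hκ (by linarith)
        obtain ⟨T₁, hT₁⟩ := eventually_atTop.1
          ((hPtend.eventually_const_lt hdlt).and (eventually_ge_atTop 1))
        have hT₁1 : (1:ℝ) ≤ T₁ := (hT₁ T₁ (le_refl _)).2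
        have hQpos : 0 < y T₁ - Real.log b + 1 := by
          have := hlogb T₁ (by linarith)
          linarith
        obtain ⟨t, htT₁, htbig⟩ : ∃ t, T₁ ≤ t ∧
            y T₁ - Real.log b + 1 ≤ (t - T₁) * (κ * (((N:ℝ) * Λ + C) / 2 - C)) := by
          refine ⟨T₁ + (y T₁ - Real.log b + 1) / (κ * (((N:ℝ) * Λ + C) / 2 - C)), ?_, ?_⟩
          · have := div_nonneg (le_of_lt hQpos) (le_of_lt hc2)
            linarith
          · rw [add_sub_cancel_left, div_mul_cancel₀ _ (ne_of_gt hc2)]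
        have hbd : ∀ u ∈ Icc T₁ t, κ * (C - P u) ≤ -(κ * (((N:ℝ) * Λ + C) / 2 - C)) := by
          intro u hu
          have h6 : ((N:ℝ) * Λ + C) / 2 < P u := (hT₁ u hu.1).1
          nlinarith
        have hgrow := hIub T₁ t (-(κ * (((N:ℝ) * Λ + C) / 2 - C))) (by linarith) htT₁ hbd
        have hyt : Real.log b ≤ y t := hlogb t (by linarith)
        nlinarith
    rwa [hΛeq] at htend
  · -- oscillating case: derive False
    exfalso
    -- first inequality (at near-maximum points with positive derivative)
    have hDR : ∀ t, 0 < t → HasDerivAt R (κ * R t * (C - P t)) t := fun t ht => hode t ht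
    have hNconst : ∀ c : ℝ, ∑ _r ∈ S, c = (N:ℝ) * c := by
      intro c
      rw [Finset.sum_const, ← hN, nsmul_eq_mul]
    have hkey1 : ∀ e, 0 < e → e < lam/2 → e < (Λ - lam)/3 →
        Real.log (Λ - 2*e) ≤ Real.log (C / N) + κ * Tbar * (C - N * (lam - e)) := by
      intro e he he1 he2
      obtain ⟨T₀, hT₀⟩ := eventually_atTop.1
        ((eventually_lt_of_limsup_lt (show Λ < Λ + e by linarith) hbddA).and
          (eventually_lt_of_lt_liminf (show lam - e < lam by linarith) hbddB))
      obtain ⟨t, htT, htlo, hthi, htd⟩ := exists_good_point (f := R)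
        (f' := fun t => κ * R t * (C - P t)) hRcont hDR
        (show Λ - 2*e < Λ - e by linarith)
        (frequently_lt_of_liminf_lt hcobB (by linarith))
        (frequently_lt_of_lt_limsup hcobA (by linarith))
        (max (T₀ + 2*τmax) (τmax + 1)) (by positivity)
      have htT₀ : T₀ + 2*τmax ≤ t := le_trans (le_max_left _ _) htT
      have htτ : τmax + 1 ≤ t := le_trans (le_max_right _ _) htT
      have hRt0 : 0 < R t := hpos t (by linarith)
      have htd' : 0 < κ * R t * (C - P t) := htd
      have hPtC : P t ≤ C := by nlinarith [mul_pos hκ hRt0]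
      have hPt0 : 0 < P t := by
        have h1 : ∀ q ∈ S, b ≤ R (t - τ q) :=
          fun q hq => hb _ (by have := hτle q hq; linarith)
        have h2 := Finset.sum_le_sum h1
        rw [hNconst b] at h2
        have : (0:ℝ) < N * b := by positivity
        exact lt_of_lt_of_le this h2
      -- per-delay integral estimate
      have hper : ∀ r ∈ S, y t - y (t - τ r) ≤ τ r * (κ * (C - N*(lam - e))) := by
        intro r hr
        have hτr0 := hτ r hr
        have hτrm := hτle r hr
        have hs0 : 0 < t - τ r := by linarith
        have hbd : ∀ u ∈ Icc (t - τ r) t, κ * (C - P u) ≤ κ * (C - N*(lam - e)) := by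
          intro u hu
          have hPu : (N:ℝ)*(lam - e) ≤ P u := by
            have h1 : ∀ q ∈ S, lam - e ≤ R (u - τ q) := by
              intro q hq
              have hq1 := hτle q hq
              have hq2 := hu.1
              exact le_of_lt (hT₀ (u - τ q) (by linarith)).2
            have h2 := Finset.sum_le_sum h1
            rwa [hNconst (lam - e)] at h2
          nlinarith
        have hstep := hIub (t - τ r) t _ hs0 (by linarith) hbd
        have heq : t - (t - τ r) = τ r := by ring
        rw [heq] at hstep
        exact hstep
      -- sum over r
      have hsumineq : (N:ℝ) * y t ≤ (∑ r ∈ S, y (t - τ r)) + (κ * (C - N*(lam - e))) * (N * Tbar) := by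
        have h1 := Finset.sum_le_sum hper
        rw [Finset.sum_sub_distrib, hNconst (y t), ← Finset.sum_mul, hsum] at h1
        linarith
      -- Jensen
      have hjensen : ∑ r ∈ S, y (t - τ r) ≤ (N:ℝ) * Real.log (C/N) := by
        have h1 := sum_log_le S hS (fun r => R (t - τ r))
          (fun r hr => hpos _ (by have := hτle r hr; linarith))
        have hcard : ((S.card : ℕ) : ℝ) = (N:ℝ) := by rw [hN]
        rw [hcard] at h1
        have h2 : Real.log ((∑ r ∈ S, R (t - τ r)) / (N:ℝ)) ≤ Real.log (C/(N:ℝ)) := by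
          apply Real.log_le_log
          · have : 0 < P t := hPt0
            simp only [hP] at this
            positivity
          · gcongr
        calc ∑ r ∈ S, y (t - τ r) = ∑ r ∈ S, Real.log (R (t - τ r)) := rfl
          _ ≤ (N:ℝ) * Real.log ((∑ r ∈ S, R (t - τ r)) / (N:ℝ)) := h1
          _ ≤ (N:ℝ) * Real.log (C/(N:ℝ)) := mul_le_mul_of_nonneg_left h2 (le_of_lt hNR)
      -- conclude
      have hyt : Real.log (Λ - 2*e) ≤ y t := by
        have h3 : 0 < Λ - 2*e := by linarith
        exact Real.log_le_log h3 htlo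
      have hfin : y t ≤ Real.log (C/N) + κ * Tbar * (C - N*(lam - e)) := by
        have h4 : (N:ℝ) * y t ≤ (N:ℝ) * Real.log (C/N) + (κ * (C - N*(lam - e))) * (N * Tbar) := by
          linarith
        have h5 : (N:ℝ) * y t ≤ (N:ℝ) * (Real.log (C/N) + κ * Tbar * (C - N*(lam - e))) := by
          nlinarith [h4]
        exact le_of_mul_le_mul_left (by linarith [h5]) hNR
      linarith
    have hΛlam3 : 0 < min (lam/2) ((Λ - lam)/3) := lt_min (by linarith) (by linarith)
    have hineq1 : Real.log Λ ≤ Real.log (C / N) + κ * Tbar * (C - N * lam) := by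
      by_contra hcon
      push_neg at hcon
      have hFc : ContinuousAt (fun e : ℝ =>
          Real.log (C/N) + κ * Tbar * (C - N*(lam - e)) - Real.log (Λ - 2*e)) 0 := by
        apply ContinuousAt.sub
        · fun_prop
        · apply ContinuousAt.log
          · fun_prop
          · norm_num
            linarith
      have hF0 : (fun e : ℝ =>
          Real.log (C/N) + κ * Tbar * (C - N*(lam - e)) - Real.log (Λ - 2*e)) 0 < 0 := by
        norm_num
        linarith
      have hev : ∀ᶠ e in nhdsWithin 0 (Ioi 0), (fun e : ℝ =>
          Real.log (C/N) + κ * Tbar * (C - N*(lam - e)) - Real.log (Λ - 2*e)) e < 0 :=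
        ((hFc.tendsto.mono_left nhdsWithin_le_nhds).eventually_lt_const hF0)
      have hev2 : ∀ᶠ e in nhdsWithin 0 (Ioi 0),
          (0:ℝ) < e ∧ e < min (lam/2) ((Λ - lam)/3) := by
        filter_upwards [Ioo_mem_nhdsGT_of_mem
          (⟨le_refl (0:ℝ), hΛlam3⟩ : (0:ℝ) ∈ Ico 0 (min (lam/2) ((Λ - lam)/3)))] with e hee
        exact ⟨hee.1, hee.2⟩
      obtain ⟨e, hFe, he0, hemin⟩ := (hev.and hev2).exists
      have hk := hkey1 e he0 (lt_of_lt_of_le hemin (min_le_left _ _))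
        (lt_of_lt_of_le hemin (min_le_right _ _))
      simp only at hFe
      linarith
    -- lam ≤ C/N
    have hlamle : lam ≤ C / N := by
      by_contra hcon
      push_neg at hcon
      have h1 : κ * Tbar * (C - N * lam) ≤ 0 := by
        apply mul_nonpos_of_nonneg_of_nonpos (mul_nonneg (le_of_lt hκ) hTb0)
        have : C < N * lam := by
          calc C = N * (C/N) := by field_simp
            _ < N * lam := by
                apply mul_lt_mul_of_pos_left hcon hNR
        linarith
      have h2 : Real.log (C/N) < Real.log lam := Real.log_lt_log hCN hcon
      have h3 : Real.log lam ≤ Real.log Λ := Real.log_le_log hlam0 hlamΛ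
      linarith
    -- second inequality (at near-minimum points with negative derivative)
    have hkey2 : ∀ e, 0 < e → e < lam/2 → e < (Λ - lam)/3 →
        Real.log (lam - e) + (C/N - (lam - e)) *
          ((Real.log (Λ + e) - Real.log (lam - e)) / ((Λ + e) - (lam - e)))
          - κ * Tbar * (N*(Λ + e) - C) ≤ Real.log (lam + 2*e) := by
      intro e he he1 he2
      have hlame : 0 < lam - e := by linarith
      have hlamΛe : lam - e < Λ + e := by linarith
      obtain ⟨T₀, hT₀⟩ := eventually_atTop.1
        ((eventually_lt_of_limsup_lt (show Λ < Λ + e by linarith) hbddA).and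
          (eventually_lt_of_lt_liminf (show lam - e < lam by linarith) hbddB))
      obtain ⟨t, htT, htlo, hthi, htd⟩ := exists_good_point (f := fun s => -R s)
        (f' := fun s => -(κ * R s * (C - P s))) hRcont.neg (fun s hs => (hDR s hs).neg)
        (show -(lam + 2*e) < -(lam + e) by linarith)
        ((frequently_lt_of_lt_limsup hcobA (show lam + 2*e < Λ by linarith)).mono
          (fun s hs => by linarith))
        ((frequently_lt_of_liminf_lt hcobB (show lam < lam + e by linarith)).mono
          (fun s hs => by linarith))
        (max (T₀ + 2*τmax) (τmax + 1)) (by positivity)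
      have htlo' : -(lam + 2*e) ≤ -R t := htlo
      have hthi' : -R t ≤ -(lam + e) := hthi
      have htdd : 0 < -(κ * R t * (C - P t)) := htd
      have htT₀ : T₀ + 2*τmax ≤ t := le_trans (le_max_left _ _) htT
      have htτ : τmax + 1 ≤ t := le_trans (le_max_right _ _) htT
      have hRt0 : 0 < R t := hpos t (by linarith)
      have hRtlo : lam + e ≤ R t := by linarith
      have hRthi : R t ≤ lam + 2*e := by linarith
      have htd' : κ * R t * (C - P t) < 0 := by linarith
      have hPtC : C ≤ P t := by nlinarith [mul_pos hκ hRt0]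
      -- per-delay integral estimate (lower bound on y t - y (t - τ r))
      have hper : ∀ r ∈ S, y (t - τ r) ≤ y t + τ r * (κ*(N*(Λ + e) - C)) := by
        intro r hr
        have hτr0 := hτ r hr
        have hτrm := hτle r hr
        have hs0 : 0 < t - τ r := by linarith
        have hbd : ∀ u ∈ Icc (t - τ r) t, κ*(C - N*(Λ + e)) ≤ κ * (C - P u) := by
          intro u hu
          have hPu : P u ≤ (N:ℝ)*(Λ + e) := by
            have h1 : ∀ q ∈ S, R (u - τ q) ≤ Λ + e := by
              intro q hq
              have hq1 := hτle q hq
              have hq2 := hu.1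
              exact le_of_lt (hT₀ (u - τ q) (by linarith)).1
            have h2 := Finset.sum_le_sum h1
            rwa [hNconst (Λ + e)] at h2
          nlinarith
        have hstep := hIlb (t - τ r) t _ hs0 (by linarith) hbd
        have heq : t - (t - τ r) = τ r := by ring
        rw [heq] at hstep
        have hswap : τ r * (κ*(C - N*(Λ + e))) = -(τ r * (κ*(N*(Λ + e) - C))) := by ring
        rw [hswap] at hstep
        linarith
      -- chord bound per r
      have hchord : ∀ r ∈ S, Real.log (lam - e) + (R (t - τ r) - (lam - e)) *
          ((Real.log (Λ + e) - Real.log (lam - e)) / ((Λ + e) - (lam - e))) ≤ y (t - τ r) := by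
        intro r hr
        have hτrm := hτle r hr
        have hu1 : lam - e ≤ R (t - τ r) := le_of_lt (hT₀ (t - τ r) (by linarith)).2
        have hu2 : R (t - τ r) ≤ Λ + e := le_of_lt (hT₀ (t - τ r) (by linarith)).1
        exact log_chord hlame hlamΛe hu1 hu2
      -- sum of chord bounds
      have hslope0 : 0 ≤ (Real.log (Λ + e) - Real.log (lam - e)) / ((Λ + e) - (lam - e)) := by
        apply div_nonneg _ (by linarith)
        have := Real.log_le_log hlame (le_of_lt hlamΛe)
        linarith
      have hsum1 : (N:ℝ) * Real.log (lam - e) + (C - N*(lam - e)) *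
          ((Real.log (Λ + e) - Real.log (lam - e)) / ((Λ + e) - (lam - e))) ≤
          ∑ r ∈ S, y (t - τ r) := by
        have h1 := Finset.sum_le_sum hchord
        rw [Finset.sum_add_distrib, hNconst (Real.log (lam - e)), ← Finset.sum_mul,
          Finset.sum_sub_distrib, hNconst (lam - e)] at h1
        have h2 : (C - N*(lam - e)) *
            ((Real.log (Λ + e) - Real.log (lam - e)) / ((Λ + e) - (lam - e))) ≤
            ((∑ r ∈ S, R (t - τ r)) - N*(lam - e)) *
            ((Real.log (Λ + e) - Real.log (lam - e)) / ((Λ + e) - (lam - e))) := by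
          apply mul_le_mul_of_nonneg_right _ hslope0
          have : C ≤ ∑ r ∈ S, R (t - τ r) := hPtC
          linarith
        linarith
      -- sum of integral estimates
      have hsum2 : ∑ r ∈ S, y (t - τ r) ≤ (N:ℝ) * y t + κ*(N*(Λ + e) - C) * (N * Tbar) := by
        have h1 := Finset.sum_le_sum hper
        rw [Finset.sum_add_distrib, hNconst (y t), ← Finset.sum_mul, hsum] at h1
        linarith
      -- y t ≤ log(lam + 2e)
      have hyt : y t ≤ Real.log (lam + 2*e) := Real.log_le_log hRt0 hRthi
      -- combine and divide by N
      have hcomb : (N:ℝ) * (Real.log (lam - e) + (C/N - (lam - e)) *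
          ((Real.log (Λ + e) - Real.log (lam - e)) / ((Λ + e) - (lam - e)))
          - κ * Tbar * (N*(Λ + e) - C)) ≤ (N:ℝ) * Real.log (lam + 2*e) := by
        have hexp : (N:ℝ) * (C/N - (lam - e)) = C - N*(lam - e) := by
          field_simp
        have hLHS : (N:ℝ) * (Real.log (lam - e) + (C/N - (lam - e)) *
            ((Real.log (Λ + e) - Real.log (lam - e)) / ((Λ + e) - (lam - e)))
            - κ * Tbar * (N*(Λ + e) - C)) =
            (N:ℝ) * Real.log (lam - e) + (C - N*(lam - e)) *
            ((Real.log (Λ + e) - Real.log (lam - e)) / ((Λ + e) - (lam - e)))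
            - κ*(N*(Λ + e) - C) * (N * Tbar) := by
          rw [← hexp]
          ring
        rw [hLHS]
        have := mul_le_mul_of_nonneg_left hyt (le_of_lt hNR)
        linarith
      exact le_of_mul_le_mul_left hcomb hNR
    have hineq2 : (C / N - lam) * ((Real.log Λ - Real.log lam) / (Λ - lam)) -
        κ * Tbar * (N * Λ - C) ≤ 0 := by
      have hFc : ContinuousAt (fun e : ℝ =>
          Real.log (lam - e) + (C/N - (lam - e)) *
          ((Real.log (Λ + e) - Real.log (lam - e)) / ((Λ + e) - (lam - e)))
          - κ * Tbar * (N*(Λ + e) - C) - Real.log (lam + 2*e)) 0 := by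
        have hc1 : ContinuousAt (fun e : ℝ => Real.log (lam - e)) 0 :=
          ContinuousAt.log (by fun_prop) (by norm_num; linarith)
        have hc2 : ContinuousAt (fun e : ℝ => Real.log (Λ + e)) 0 :=
          ContinuousAt.log (by fun_prop) (by norm_num; linarith)
        have hc3 : ContinuousAt (fun e : ℝ => Real.log (lam + 2*e)) 0 :=
          ContinuousAt.log (by fun_prop) (by norm_num; linarith)
        have hc4 : ContinuousAt (fun e : ℝ =>
            (Real.log (Λ + e) - Real.log (lam - e)) / ((Λ + e) - (lam - e))) 0 := by
          apply ContinuousAt.div (hc2.sub hc1) (by fun_prop)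
          norm_num
          linarith
        exact ((hc1.add ((by fun_prop : ContinuousAt (fun e : ℝ => C/N - (lam - e)) 0).mul
          hc4)).sub (by fun_prop)).sub hc3
      by_contra hcon
      push_neg at hcon
      have hF0 : 0 < (fun e : ℝ =>
          Real.log (lam - e) + (C/N - (lam - e)) *
          ((Real.log (Λ + e) - Real.log (lam - e)) / ((Λ + e) - (lam - e)))
          - κ * Tbar * (N*(Λ + e) - C) - Real.log (lam + 2*e)) 0 := by
        norm_num
        linarith
      have hev : ∀ᶠ e in nhdsWithin 0 (Ioi 0), 0 < (fun e : ℝ =>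
          Real.log (lam - e) + (C/N - (lam - e)) *
          ((Real.log (Λ + e) - Real.log (lam - e)) / ((Λ + e) - (lam - e)))
          - κ * Tbar * (N*(Λ + e) - C) - Real.log (lam + 2*e)) e :=
        ((hFc.tendsto.mono_left nhdsWithin_le_nhds).eventually_const_lt hF0)
      have hev2 : ∀ᶠ e in nhdsWithin 0 (Ioi 0),
          (0:ℝ) < e ∧ e < min (lam/2) ((Λ - lam)/3) := by
        filter_upwards [Ioo_mem_nhdsGT_of_mem
          (⟨le_refl (0:ℝ), hΛlam3⟩ : (0:ℝ) ∈ Ico 0 (min (lam/2) ((Λ - lam)/3)))] with e hee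
        exact ⟨hee.1, hee.2⟩
      obtain ⟨e, hFe, he0, hemin⟩ := (hev.and hev2).exists
      have hk := hkey2 e he0 (lt_of_lt_of_le hemin (min_le_left _ _))
        (lt_of_lt_of_le hemin (min_le_right _ _))
      simp only at hFe
      linarith
    -- final algebra
    have hCN' : C / (N:ℝ) ≠ 0 := ne_of_gt hCN
    have hu0 : 0 < Λ / (C/N) := div_pos hΛ0 hCN
    have hv0 : 0 < lam / (C/N) := div_pos hlam0 hCN
    have hlogu : Real.log (Λ / (C/N)) = Real.log Λ - Real.log (C/N) :=
      Real.log_div (ne_of_gt hΛ0) hCN'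
    have hlogv : Real.log (lam / (C/N)) = Real.log lam - Real.log (C/N) :=
      Real.log_div (ne_of_gt hlam0) hCN'
    apply final_algebra (a := κ * C * Tbar) (u := Λ / (C/N)) (v := lam / (C/N))
      (by positivity) ha hv0 ((div_le_one hCN).2 hlamle)
      (div_lt_div_of_pos_right hosc hCN)
    · -- h1
      rw [hlogu]
      have hexp : κ * C * Tbar * (1 - lam / (C/N)) = κ * Tbar * (C - N * lam) := by
        field_simp
      rw [hexp]
      linarith [hineq1]
    · -- h2
      have hmul : (C/N - lam) * (Real.log Λ - Real.log lam) ≤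
          κ * Tbar * (N*Λ - C) * (Λ - lam) := by
        have h1 : (C/N - lam) * ((Real.log Λ - Real.log lam) / (Λ - lam)) ≤
            κ * Tbar * (N*Λ - C) := by linarith [hineq2]
        rw [mul_div_assoc'] at h1
        exact (div_le_iff₀ (by linarith : (0:ℝ) < Λ - lam)).1 h1
      have hgoal : (1 - lam / (C/N)) * (Real.log (Λ / (C/N)) - Real.log (lam / (C/N))) ≤
          κ * C * Tbar * (Λ / (C/N) - 1) * (Λ / (C/N) - lam / (C/N)) := by
        rw [hlogu, hlogv]
        have hL : (1 - lam / (C/N)) * (Real.log Λ - Real.log (C/N) -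
            (Real.log lam - Real.log (C/N))) =
            ((C/N - lam) * (Real.log Λ - Real.log lam)) / (C/N) := by
          field_simp
          ring_nf
          try tauto
          try ring
        have hR : κ * C * Tbar * (Λ / (C/N) - 1) * (Λ / (C/N) - lam / (C/N)) =
            (κ * Tbar * (N*Λ - C) * (Λ - lam)) / (C/N) := by
          field_simp
        rw [hL, hR]
        gcongr
      exact hgoal
end

section
/- Under condition κ²T̄²ȳ(ȳ+w)f⁽¹⁾f⁽²⁾/(1−κT̄f(0)) < 1 with w = κT̄f(0)ȳ/(1−κT̄f(0)), one has κT̄·((ȳ+w)/N)·|f(ȳ+w)| < ȳ/N, i.e., κ(ȳ+w)T̄|f(ȳ+w)| < ȳ. -/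
open Set

theorem stmt_16 (κ Tbar ybar w f1 f2 : ℝ)
    (f : ℝ → ℝ) (hanti : StrictAnti f) (hf0 : 0 < f 0)
    (hybar : 0 < ybar) (hfzero : f ybar = 0)
    (hκ : 0 < κ) (hT : 0 < Tbar) (hsmall : κ * Tbar * f 0 < 1)
    (hw : w = κ * Tbar * f 0 * ybar / (1 - κ * Tbar * f 0))
    (hf1 : IsGreatest {x : ℝ | ∃ u ∈ Ioc (0:ℝ) ybar, x = f (ybar - u) / u} f1)
    (hf2 : IsGreatest {x : ℝ | ∃ u ∈ Ioc (0:ℝ) w, x = -f (ybar + u) / u} f2)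
    (hcond : κ^2 * Tbar^2 * ybar * (ybar + w) * f1 * f2 / (1 - κ * Tbar * f 0) < 1) :
    κ * (ybar + w) * Tbar * |f (ybar + w)| < ybar := by
  have hc : 0 < 1 - κ * Tbar * f 0 := by linarith
  have ha : 0 < κ * Tbar * f 0 := by positivity
  have hwpos : 0 < w := by rw [hw]; positivity
  have hwc : w * (1 - κ * Tbar * f 0) = κ * Tbar * f 0 * ybar := by
    rw [hw]; exact div_mul_cancel₀ _ hc.ne'
  -- f1 ≥ f 0 / ybar
  have h1 : f 0 / ybar ≤ f1 := hf1.2 ⟨ybar, ⟨hybar, le_refl _⟩, by simp⟩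
  have h1' : f 0 ≤ f1 * ybar := by
    rw [div_le_iff₀ hybar] at h1; linarith
  -- f2 ≥ -f(ybar+w)/w
  have h2 : -f (ybar + w) / w ≤ f2 := hf2.2 ⟨w, ⟨hwpos, le_refl _⟩, rfl⟩
  have hfneg : f (ybar + w) < 0 := by
    calc f (ybar + w) < f ybar := hanti (by linarith)
    _ = 0 := hfzero
  have h2' : -f (ybar + w) ≤ f2 * w := by
    rw [div_le_iff₀ hwpos] at h2; linarith
  have hf2pos : 0 < f2 := by nlinarith [h2', hfneg, hwpos]
  have habs : |f (ybar + w)| = -f (ybar + w) := abs_of_neg hfneg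
  rw [habs]
  have hcond' : κ^2 * Tbar^2 * ybar * (ybar + w) * f1 * f2 < 1 - κ * Tbar * f 0 := by
    rw [div_lt_one hc] at hcond; exact hcond
  -- multiply goal by c
  rw [← mul_lt_mul_iff_left₀ hc]
  calc κ * (ybar + w) * Tbar * -f (ybar + w) * (1 - κ * Tbar * f 0)
      ≤ κ * (ybar + w) * Tbar * (f2 * w) * (1 - κ * Tbar * f 0) := by
        have : 0 ≤ κ * (ybar + w) * Tbar := by positivity
        nlinarith [mul_le_mul_of_nonneg_left h2' this]
    _ = κ * (ybar + w) * Tbar * f2 * (κ * Tbar * f 0 * ybar) := by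
        rw [mul_assoc (κ * (ybar + w) * Tbar) (f2 * w), mul_assoc f2 w, hwc]; ring
    _ ≤ κ * (ybar + w) * Tbar * f2 * (κ * Tbar * (f1 * ybar) * ybar) := by
        have h0 : 0 ≤ κ * (ybar + w) * Tbar * f2 := by positivity
        have : κ * Tbar * f 0 * ybar ≤ κ * Tbar * (f1 * ybar) * ybar :=
          mul_le_mul_of_nonneg_right (mul_le_mul_of_nonneg_left h1' (by positivity)) hybar.le
        nlinarith
    _ = κ^2 * Tbar^2 * ybar * (ybar + w) * f1 * f2 * ybar := by ring
    _ < (1 - κ * Tbar * f 0) * ybar := by nlinarith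
    _ = ybar * (1 - κ * Tbar * f 0) := by ring
end
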